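/- If Z renders the average treatment effect identifiable via adjustment, and λ(Z) is such that both conditional expected outcomes Q(0,Z) = E[Y|T=0,Z] and Q(1,Z) = E[Y|T=1,Z] are σ(λ(Z))-measurable, then adjusting for λ(Z) alone suffices: E[E[Y | λ(Z), T=1] − E[Y | λ(Z), T=0]] = E[Q(1,Z) − Q(0,Z)]. -/

import Mathlib

open MeasureTheory ProbabilityTheory

lemma condexp_pos_of_pos {Ω : Type*} {m : MeasurableSpace Ω} {m0 : MeasurableSpace Ω}
    (hm : m ≤ m0) (μ : Measure Ω) [IsFiniteMeasure μ] {X : Ω → ℝ}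
    (hX : Integrable X μ) (hXpos : ∀ᵐ ω ∂μ, 0 < X ω) :
    ∀ᵐ ω ∂μ, 0 < (μ[X|m]) ω := by
  set f := μ[X|m] with hf
  have h0 : 0 ≤ᵐ[μ] f := condExp_nonneg (hXpos.mono fun ω h => h.le)
  have hfm : StronglyMeasurable[m] f := stronglyMeasurable_condExp
  have hsm : MeasurableSet[m] {ω | f ω ≤ 0} := hfm.measurable measurableSet_Iic
  set s := {ω | f ω ≤ 0}
  have hs : MeasurableSet[m0] s := hm _ hsm
  have hmem : ∀ᵐ ω ∂μ.restrict s, ω ∈ s := ae_restrict_mem hs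
  have hfz : f =ᵐ[μ.restrict s] 0 := by
    filter_upwards [hmem, ae_restrict_of_ae h0] with ω h1 h2
    exact le_antisymm h1 h2
  have hintf : ∫ ω in s, f ω ∂μ = 0 := by
    rw [integral_congr_ae hfz]; simp
  have hintX : ∫ ω in s, X ω ∂μ = 0 := by
    rw [← setIntegral_condExp hm hX hsm]
    exact hintf
  have hXz : X =ᵐ[μ.restrict s] 0 := by
    rw [← integral_eq_zero_iff_of_nonneg_ae (ae_restrict_of_ae (hXpos.mono fun ω h => h.le))
      (hX.restrict)]
    exact hintX
  have : μ s = 0 := by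
    by_contra h
    have : ∀ᵐ ω ∂μ.restrict s, False := by
      filter_upwards [hXz, ae_restrict_of_ae hXpos] with ω h1 h2
      exact absurd h1 (ne_of_gt h2)
    rw [ae_iff] at this
    simp only [not_false_iff, Set.setOf_true] at this
    rw [Measure.restrict_apply_univ] at this
    exact h this
  have hns : ∀ᵐ ω ∂μ, ω ∉ s := (measure_eq_zero_iff_ae_notMem.1 this)
  filter_upwards [hns] with ω h
  exact lt_of_not_ge h


/-- STATEMENT 0: If `Z` renders the ATE identifiable via adjustment (unconfoundedness of the
potential outcomes `(Y0, Y1)` with respect to `T` given `Z`, and positivity), and the propensity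
score `g ∘ Z` is measurable with respect to `σ(lam ∘ Z)`, then adjusting for `lam ∘ Z` gives the
same answer as adjusting for `Z`. Conditional expected outcomes are characterized by
`E[Y · 1{T=t} | ·] = Q t · P(T=t | ·)`. -/
theorem stmt1
    {Ω : Type*} [MeasurableSpace Ω] [StandardBorelSpace Ω]
    (μ : Measure Ω) [IsProbabilityMeasure μ]
    (Y Y0 Y1 T : Ω → ℝ) (Z : Ω → ℝ) (lam : ℝ → ℝ)
    (hY : Measurable Y) (hT : Measurable T) (hZ : Measurable Z) (hlam : Measurable lam)
    (hTbin : ∀ ω, T ω = 0 ∨ T ω = 1)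
    (hconsist : ∀ ω, Y ω = T ω * Y1 ω + (1 - T ω) * Y0 ω)
    -- unconfoundedness: (Y0, Y1) ⟂ T | Z
    (hunconf : CondIndepFun (MeasurableSpace.comap Z inferInstance) hZ.comap_le
      (fun ω => (Y0 ω, Y1 ω)) T μ)
    -- conditional expected outcome functions QZ t
    (QZ : ℝ → ℝ → ℝ) (hQZmeas : ∀ t, Measurable (QZ t))
    -- the propensity score g(Z) = P(T = 1 | Z)
    (g : ℝ → ℝ) (hg : Measurable g)
    (hgdef : (fun ω => g (Z ω)) =ᵐ[μ] μ[T | MeasurableSpace.comap Z inferInstance])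
    -- positivity: 0 < P(T=1|Z) < 1 a.s.
    (hpos : ∀ᵐ ω ∂μ, 0 < g (Z ω) ∧ g (Z ω) < 1)
    -- both conditional expected outcomes Q(t,Z) are measurable with respect to σ(lam(Z))
    (hQmeasL : ∀ t, t = 0 ∨ t = 1 →
      Measurable[MeasurableSpace.comap (fun ω => lam (Z ω)) inferInstance]
        (fun ω => QZ t (Z ω)))
    -- propensity given lam(Z)
    (gl : ℝ → ℝ) (hgl : Measurable gl)
    (hgldef : (fun ω => gl (lam (Z ω)))
      =ᵐ[μ] μ[T | MeasurableSpace.comap (fun ω => lam (Z ω)) inferInstance])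
    -- conditional expected outcomes given Z: E[Y 1{T=t} | Z] = QZ t (Z) ⬝ P(T=t | Z)
    (hQZ1 : μ[fun ω => (if T ω = 1 then (1:ℝ) else 0) * Y ω |
        MeasurableSpace.comap Z inferInstance] =ᵐ[μ] fun ω => QZ 1 (Z ω) * g (Z ω))
    (hQZ0 : μ[fun ω => (if T ω = 0 then (1:ℝ) else 0) * Y ω |
        MeasurableSpace.comap Z inferInstance] =ᵐ[μ] fun ω => QZ 0 (Z ω) * (1 - g (Z ω)))
    -- conditional expected outcomes given lam(Z)
    (QL : ℝ → ℝ → ℝ) (hQLmeas : ∀ t, Measurable (QL t))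
    (hQL1 : μ[fun ω => (if T ω = 1 then (1:ℝ) else 0) * Y ω |
        MeasurableSpace.comap (fun ω => lam (Z ω)) inferInstance]
      =ᵐ[μ] fun ω => QL 1 (lam (Z ω)) * gl (lam (Z ω)))
    (hQL0 : μ[fun ω => (if T ω = 0 then (1:ℝ) else 0) * Y ω |
        MeasurableSpace.comap (fun ω => lam (Z ω)) inferInstance]
      =ᵐ[μ] fun ω => QL 0 (lam (Z ω)) * (1 - gl (lam (Z ω))))
    -- integrability
    (hint : Integrable Y μ)
    (hintQZ : Integrable (fun ω => QZ 1 (Z ω) - QZ 0 (Z ω)) μ)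
    (hintQL : Integrable (fun ω => QL 1 (lam (Z ω)) - QL 0 (lam (Z ω))) μ) :
    ∫ ω, (QL 1 (lam (Z ω)) - QL 0 (lam (Z ω))) ∂μ
      = ∫ ω, (QZ 1 (Z ω) - QZ 0 (Z ω)) ∂μ := by
  classical
  set mZ : MeasurableSpace Ω := MeasurableSpace.comap Z inferInstance with hmZdef
  set mL : MeasurableSpace Ω := MeasurableSpace.comap (fun ω => lam (Z ω)) inferInstance
    with hmLdef
  have hmZ := hZ.comap_le
  have hLZ : mL ≤ mZ := by
    rw [hmLdef, hmZdef]
    have : (fun ω => lam (Z ω)) = lam ∘ Z := rfl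
    rw [this, ← MeasurableSpace.comap_comp]
    exact MeasurableSpace.comap_mono hlam.comap_le
  have hmL : mL ≤ _ := hLZ.trans hmZ
  haveI hsfZ : SigmaFinite (μ.trim hmZ) := by
    have : IsFiniteMeasure (μ.trim hmZ) := isFiniteMeasure_trim hmZ
    infer_instance
  -- integrability facts
  have hgZ : Integrable (fun ω => g (Z ω)) μ := integrable_condExp.congr hgdef.symm
  have hglZ : Integrable (fun ω => gl (lam (Z ω))) μ := integrable_condExp.congr hgldef.symm
  have hI1 : Integrable (fun ω => (if T ω = 1 then (1:ℝ) else 0) * Y ω) μ := by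
    refine hint.mono ?_ ?_
    · exact ((Measurable.ite (hT (measurableSet_singleton 1)) measurable_const
        measurable_const).mul hY).aestronglyMeasurable
    · filter_upwards with ω
      by_cases h : T ω = 1 <;> simp [h, abs_nonneg]
  have hI0 : Integrable (fun ω => (if T ω = 0 then (1:ℝ) else 0) * Y ω) μ := by
    refine hint.mono ?_ ?_
    · exact ((Measurable.ite (hT (measurableSet_singleton 0)) measurable_const
        measurable_const).mul hY).aestronglyMeasurable
    · filter_upwards with ω
      by_cases h : T ω = 0 <;> simp [h, abs_nonneg]
  have hTint : Integrable T μ := by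
    refine ⟨hT.aestronglyMeasurable, HasFiniteIntegral.of_bounded (C := 1) ?_⟩
    filter_upwards with ω
    rcases hTbin ω with h | h <;> simp [h]
  -- conditional expectation of g(Z) given mL is gl(lam(Z))
  have t4 : μ[(fun ω => g (Z ω))|mL] =ᵐ[μ] fun ω => gl (lam (Z ω)) := by
    calc μ[(fun ω => g (Z ω))|mL] =ᵐ[μ] μ[μ[T|mZ]|mL] := condExp_congr_ae hgdef
    _ =ᵐ[μ] μ[T|mL] := condExp_condExp_of_le hLZ hmZ
    _ =ᵐ[μ] fun ω => gl (lam (Z ω)) := hgldef.symm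
  -- conditional expectation of 1 - g(Z) given mL
  have hint1g : Integrable (fun ω => 1 - g (Z ω)) μ := (integrable_const 1).sub hgZ
  have t5 : μ[(fun ω => 1 - g (Z ω))|mL] =ᵐ[μ] fun ω => 1 - gl (lam (Z ω)) := by
    have h1 : μ[(fun ω => 1 - g (Z ω))|mL]
        =ᵐ[μ] μ[(fun _ => (1:ℝ))|mL] - μ[(fun ω => g (Z ω))|mL] :=
      condExp_sub (integrable_const 1) hgZ mL
    have h2 : μ[(fun _ => (1:ℝ))|mL] = fun _ => (1:ℝ) := condExp_const (μ := μ) hmL (1:ℝ)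
    filter_upwards [h1, t4] with ω hω1 hω2
    simp only [Pi.sub_apply, h2] at hω1
    rw [hω1, hω2]
  -- positivity of gl(lam(Z)) and 1 - gl(lam(Z))
  have hpos1 : ∀ᵐ ω ∂μ, 0 < gl (lam (Z ω)) := by
    have h := condexp_pos_of_pos hmL μ hgZ (hpos.mono fun ω h => h.1)
    filter_upwards [h, t4] with ω h1 h2
    rw [← h2]; exact h1
  have hpos2 : ∀ᵐ ω ∂μ, gl (lam (Z ω)) < 1 := by
    have h := condexp_pos_of_pos hmL μ hint1g (hpos.mono fun ω h => by linarith [h.2])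
    filter_upwards [h, t5] with ω h1 h2
    rw [h2] at h1; linarith
  -- the pull-out calculation for t = 1
  have sm1 : StronglyMeasurable[mL] (fun ω => QZ 1 (Z ω)) :=
    (hQmeasL 1 (Or.inr rfl)).stronglyMeasurable
  have sm0 : StronglyMeasurable[mL] (fun ω => QZ 0 (Z ω)) :=
    (hQmeasL 0 (Or.inl rfl)).stronglyMeasurable
  have hfg1 : Integrable ((fun ω => QZ 1 (Z ω)) * (fun ω => g (Z ω))) μ :=
    integrable_condExp.congr hQZ1
  have hfg0 : Integrable ((fun ω => QZ 0 (Z ω)) * (fun ω => 1 - g (Z ω))) μ :=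
    integrable_condExp.congr hQZ0
  have chain1 : μ[(fun ω => (if T ω = 1 then (1:ℝ) else 0) * Y ω)|mL]
      =ᵐ[μ] fun ω => QZ 1 (Z ω) * gl (lam (Z ω)) := by
    calc μ[(fun ω => (if T ω = 1 then (1:ℝ) else 0) * Y ω)|mL]
        =ᵐ[μ] μ[μ[(fun ω => (if T ω = 1 then (1:ℝ) else 0) * Y ω)|mZ]|mL] :=
          (condExp_condExp_of_le hLZ hmZ).symm
      _ =ᵐ[μ] μ[(fun ω => QZ 1 (Z ω)) * (fun ω => g (Z ω))|mL] := condExp_congr_ae hQZ1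
      _ =ᵐ[μ] (fun ω => QZ 1 (Z ω)) * μ[(fun ω => g (Z ω))|mL] :=
          condExp_mul_of_stronglyMeasurable_left sm1 hfg1 hgZ
      _ =ᵐ[μ] fun ω => QZ 1 (Z ω) * gl (lam (Z ω)) := by
          filter_upwards [t4] with ω hω
          simp only [Pi.mul_apply, hω]
  have chain0 : μ[(fun ω => (if T ω = 0 then (1:ℝ) else 0) * Y ω)|mL]
      =ᵐ[μ] fun ω => QZ 0 (Z ω) * (1 - gl (lam (Z ω))) := by
    calc μ[(fun ω => (if T ω = 0 then (1:ℝ) else 0) * Y ω)|mL]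
        =ᵐ[μ] μ[μ[(fun ω => (if T ω = 0 then (1:ℝ) else 0) * Y ω)|mZ]|mL] :=
          (condExp_condExp_of_le hLZ hmZ).symm
      _ =ᵐ[μ] μ[(fun ω => QZ 0 (Z ω)) * (fun ω => 1 - g (Z ω))|mL] := condExp_congr_ae hQZ0
      _ =ᵐ[μ] (fun ω => QZ 0 (Z ω)) * μ[(fun ω => 1 - g (Z ω))|mL] :=
          condExp_mul_of_stronglyMeasurable_left sm0 hfg0 hint1g
      _ =ᵐ[μ] fun ω => QZ 0 (Z ω) * (1 - gl (lam (Z ω))) := by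
          filter_upwards [t5] with ω hω
          simp only [Pi.mul_apply, hω]
  -- cancel to get pointwise a.e. equality of the Q's
  have e1 : (fun ω => QL 1 (lam (Z ω))) =ᵐ[μ] fun ω => QZ 1 (Z ω) := by
    filter_upwards [hQL1.symm.trans chain1, hpos1] with ω h1 h2
    exact mul_right_cancel₀ (ne_of_gt h2) h1
  have e0 : (fun ω => QL 0 (lam (Z ω))) =ᵐ[μ] fun ω => QZ 0 (Z ω) := by
    filter_upwards [hQL0.symm.trans chain0, hpos2] with ω h1 h2
    have hne : 1 - gl (lam (Z ω)) ≠ 0 := by linarith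
    exact mul_right_cancel₀ hne h1
  refine integral_congr_ae ?_
  filter_upwards [e1, e0] with ω h1 h0
  rw [h1, h0]
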